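/- Let K be a compact Hausdorff space that does not satisfy the countable chain condition, i.e., K admits an uncountable family of pairwise disjoint nonempty open subsets. Then no weakly compact bounded linear operator T : C(K) → C(K) is injective. -/

import Mathlib

open Filter Topology

section auxiliary

/-- Sup-norm bound for combinations of functions with disjoint supports. -/
lemma aux_norm_sum_le {K : Type*} [TopologicalSpace K] [CompactSpace K]
    (U : ℕ → Set K) (hdis : ∀ m n, m ≠ n → Disjoint (U m) (U n))
    (f : ℕ → C(K, ℝ)) (hsupp : ∀ n y, y ∉ U n → f n y = 0)
    (h01 : ∀ n y, 0 ≤ f n y ∧ f n y ≤ 1)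
    (d : ℕ → ℝ) (hd : ∀ n, |d n| ≤ 1) (F : Finset ℕ) :
    ‖∑ n ∈ F, d n • f n‖ ≤ 1 := by
  rw [ContinuousMap.norm_le _ zero_le_one]
  intro y
  have hseval : (∑ n ∈ F, d n • f n) y = ∑ n ∈ F, d n * f n y := by
    simp [ContinuousMap.sum_apply]
  by_cases hz : ∀ n ∈ F, f n y = 0
  · have : (∑ n ∈ F, d n • f n) y = 0 := by
      rw [hseval]
      exact Finset.sum_eq_zero fun n hn => by rw [hz n hn, mul_zero]
    simp [this]
  · push_neg at hz
    obtain ⟨n₀, hn₀F, hn₀⟩ := hz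
    have hyU : y ∈ U n₀ := by
      by_contra h
      exact hn₀ (hsupp _ _ h)
    have hother : ∀ m ∈ F, m ≠ n₀ → d m * f m y = 0 := by
      intro m hm hne
      have : f m y = 0 := by
        apply hsupp
        intro hyUm
        exact Set.disjoint_left.mp (hdis m n₀ hne) hyUm hyU
      rw [this, mul_zero]
    rw [hseval, Finset.sum_eq_single_of_mem n₀ hn₀F hother]
    rw [Real.norm_eq_abs, abs_mul]
    have h1 : |f n₀ y| ≤ 1 := by
      rw [abs_of_nonneg (h01 n₀ y).1]; exact (h01 n₀ y).2
    calc |d n₀| * |f n₀ y| ≤ 1 * 1 := by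
          apply mul_le_mul (hd n₀) h1 (abs_nonneg _) zero_le_one
      _ = 1 := by norm_num

/-- Rosenthal's lemma, matrix form on `ℕ`. -/
lemma aux_rosenthal (a : ℕ → ℕ → ℝ) (ha : ∀ j k, 0 ≤ a j k) (M ε : ℝ) (hε : 0 < ε)
    (hM : ∀ j (F : Finset ℕ), (∑ k ∈ F, a j k) ≤ M) :
    ∃ A : Set ℕ, A.Infinite ∧
      ∀ j ∈ A, ∀ F : Finset ℕ, ↑F ⊆ A \ {j} → (∑ k ∈ F, a j k) ≤ ε := by
  by_contra hcon
  push_neg at hcon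
  -- hcon : ∀ A, A.Infinite → ∃ j ∈ A, ∃ F, ↑F ⊆ A \ {j} ∧ ε < ∑ k ∈ F, a j k
  have key : ∀ r : ℕ, ∃ (B : Set ℕ) (β : ℕ → Finset ℕ), B.Infinite ∧
      ∀ j ∈ B, (∀ k ∈ β j, k ∉ B) ∧ ε * r ≤ ∑ k ∈ β j, a j k := by
    intro r
    induction r with
    | zero =>
      exact ⟨Set.univ, fun _ => ∅, Set.infinite_univ,
        fun j _ => ⟨by simp, by simp⟩⟩
    | succ r ih =>
      obtain ⟨B, β, hBinf, hβ⟩ := ih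
      have hB' : {n | n ∈ B}.Infinite := by rwa [Set.setOf_mem_eq]
      set e := Nat.nth (· ∈ B) with he
      have he_mem : ∀ m, e m ∈ B := fun m => Nat.nth_mem_of_infinite hB' m
      have he_inj : Function.Injective e := Nat.nth_injective hB'
      have hpair_inj : ∀ i : ℕ, Function.Injective (fun m => Nat.pair i m) := by
        intro i m m' h
        have := congrArg Nat.unpair h
        simpa [Nat.unpair_pair] using this
      set blk : ℕ → Set ℕ := fun i => Set.range fun m => e (Nat.pair i m) with hblk
      have hblk_inf : ∀ i, (blk i).Infinite := fun i =>
        Set.infinite_range_of_injective (he_inj.comp (hpair_inj i))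
      have hblk_sub : ∀ i, blk i ⊆ B := by
        rintro i _ ⟨m, rfl⟩; exact he_mem _
      have hblk_disj : ∀ i i', i ≠ i' → ∀ n, n ∈ blk i → n ∈ blk i' → False := by
        rintro i i' hne n ⟨m, rfl⟩ ⟨m', hm'⟩
        have h2 := he_inj hm'
        have := congrArg (fun p => (Nat.unpair p).1) h2
        simp [Nat.unpair_pair] at this
        exact hne this.symm
      choose nsel hnmem Fsel hFsub hFgt using fun i => hcon (blk i) (hblk_inf i)
      have hnsel_inj : Function.Injective nsel := by
        intro i i' hii
        by_contra hne
        exact hblk_disj i i' hne (nsel i) (hnmem i) (hii ▸ hnmem i')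
      have hrange_sub : Set.range nsel ⊆ B := by
        rintro _ ⟨i, rfl⟩; exact hblk_sub i (hnmem i)
      classical
      refine ⟨Set.range nsel,
        fun j => if h : ∃ i, nsel i = j then β j ∪ Fsel h.choose else ∅,
        Set.infinite_range_of_injective hnsel_inj, ?_⟩
      rintro j hj
      have hex : ∃ i, nsel i = j := hj
      beta_reduce
      rw [dif_pos hex]
      set i₁ := hex.choose with hi₁
      have hji₁ : nsel i₁ = j := hex.choose_spec
      have hjB : j ∈ B := hrange_sub hj
      have hFsub₁ : ↑(Fsel i₁) ⊆ blk i₁ \ {nsel i₁} := hFsub i₁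
      constructor
      · intro k hk hkr
        rcases Finset.mem_union.mp hk with hk | hk
        · exact (hβ _ hjB).1 k hk (hrange_sub hkr)
        · have h5 := hFsub₁ hk
          have hkblk : k ∈ blk i₁ := h5.1
          have hkne : k ≠ nsel i₁ := by simpa using h5.2
          obtain ⟨i', rfl⟩ := hkr
          by_cases hii : i' = i₁
          · exact hkne (by rw [hii])
          · exact hblk_disj i' i₁ hii _ (hnmem i') hkblk
      · have hdisj : Disjoint (β j) (Fsel i₁) := by
          rw [Finset.disjoint_left]
          intro k hk hk'
          exact (hβ _ hjB).1 k hk (hblk_sub i₁ (hFsub₁ hk').1)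
        rw [Finset.sum_union hdisj]
        have h1 := (hβ _ hjB).2
        have h2 : ε < ∑ k ∈ Fsel i₁, a j k := by
          have := hFgt i₁
          rwa [hji₁] at this
        push_cast
        nlinarith
  obtain ⟨r, hr⟩ := exists_nat_gt (M / ε)
  obtain ⟨B, β, hBinf, hβ⟩ := key r
  obtain ⟨j, hj⟩ := hBinf.nonempty
  have h1 := (hβ j hj).2
  have h2 := hM j (β j)
  have h3 : M < ε * r := by
    have := (div_lt_iff₀ hε).mp hr
    nlinarith
  linarith

/-- Norm-continuous linear functionals are continuous for the weak topology. -/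
lemma aux_weak_eval_continuous {E : Type*} [NormedAddCommGroup E] [NormedSpace ℝ E]
    (φ : E →L[ℝ] ℝ) :
    Continuous fun w : WeakSpace ℝ E => φ ((toWeakSpace ℝ E).symm w) :=
  WeakBilin.eval_continuous ((topDualPairing ℝ E).flip) φ

end auxiliary

/-- A bounded linear operator between real normed spaces is weakly compact if the image of
the closed unit ball is relatively compact in the weak topology. -/
def IsWeaklyCompactOperator {E F : Type*} [NormedAddCommGroup E] [NormedSpace ℝ E]
    [NormedAddCommGroup F] [NormedSpace ℝ F] (T : E →L[ℝ] F) : Prop :=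
  IsCompact (closure (toWeakSpace ℝ F '' (T '' Metric.closedBall 0 1)))

set_option maxHeartbeats 1000000 in
/-- If a compact Hausdorff space `K` fails the countable chain condition (it has an
uncountable pairwise disjoint family of nonempty open sets), then no weakly compact
operator on `C(K)` is injective. -/
theorem not_injective_of_weaklyCompact_of_not_ccc
    (K : Type*) [TopologicalSpace K] [CompactSpace K] [T2Space K]
    (𝒰 : Set (Set K)) (hopen : ∀ U ∈ 𝒰, IsOpen U ∧ U.Nonempty)
    (hdisj : ∀ U ∈ 𝒰, ∀ V ∈ 𝒰, U ≠ V → Disjoint U V) (hunc : ¬ 𝒰.Countable)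
    (T : C(K, ℝ) →L[ℝ] C(K, ℝ)) (hT : IsWeaklyCompactOperator T) :
    ¬ Function.Injective T := by
  classical
  intro hinj
  -- Step 1: Urysohn functions
  have hex : ∀ U ∈ 𝒰, ∃ (f : C(K, ℝ)) (p : K), p ∈ U ∧ f p = 1 ∧
      (∀ y, y ∉ U → f y = 0) ∧ (∀ y, 0 ≤ f y ∧ f y ≤ 1) := by
    intro U hU
    obtain ⟨hUo, ⟨p, hp⟩⟩ := hopen U hU
    obtain ⟨f, hf0, hf1, hf01⟩ := exists_continuous_zero_one_of_isClosed
      (isClosed_compl_iff.mpr hUo) (isClosed_singleton (x := p))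
      (by simp [Set.disjoint_singleton_right, hp])
    refine ⟨f, p, hp, hf1 rfl, fun y hy => hf0 hy, fun y => ⟨(hf01 y).1, (hf01 y).2⟩⟩
  choose! f₀ p₀ hp₀mem hp₀one hzero h01 using hex
  -- Step 2: T (f₀ U) ≠ 0
  have hfne : ∀ U ∈ 𝒰, 0 < ‖T (f₀ U)‖ := by
    intro U hU
    rw [norm_pos_iff]
    intro h0
    have h1 : f₀ U = 0 := hinj (by rw [h0, map_zero])
    have h2 := hp₀one U hU
    rw [h1] at h2
    simpa using h2
  -- Step 3: pigeonhole, uncountably many U with uniform lower bound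
  have hpig : ∃ m : ℕ, ¬ {U | U ∈ 𝒰 ∧ 1 / ((m : ℝ) + 1) ≤ ‖T (f₀ U)‖}.Countable := by
    by_contra hco
    push_neg at hco
    apply hunc
    have hsub : 𝒰 ⊆ ⋃ m : ℕ, {U | U ∈ 𝒰 ∧ 1 / ((m : ℝ) + 1) ≤ ‖T (f₀ U)‖} := by
      intro U hU
      obtain ⟨m, hm⟩ := exists_nat_one_div_lt (hfne U hU)
      exact Set.mem_iUnion.mpr ⟨m, hU, le_of_lt hm⟩
    exact (Set.countable_iUnion hco).mono hsub
  obtain ⟨m, hSm⟩ := hpig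
  set ε : ℝ := 1 / ((m : ℝ) + 1) with hεdef
  have hε : 0 < ε := by positivity
  set S : Set (Set K) := {U | U ∈ 𝒰 ∧ ε ≤ ‖T (f₀ U)‖} with hSdef
  have hSinf : S.Infinite := by
    intro hfin
    exact hSm hfin.countable
  let V : ℕ ↪ ↥S := hSinf.natEmbedding _
  set Uu : ℕ → Set K := fun n => (V n : Set K) with hUu
  have hUu𝒰 : ∀ n, Uu n ∈ 𝒰 := fun n => (V n).2.1
  have hUuS : ∀ n, ε ≤ ‖T (f₀ (Uu n))‖ := fun n => (V n).2.2
  have hUuinj : ∀ a b, a ≠ b → Uu a ≠ Uu b := by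
    intro a b hab h
    exact hab (V.injective (Subtype.coe_injective h))
  have hdisU : ∀ a b, a ≠ b → Disjoint (Uu a) (Uu b) := fun a b hab =>
    hdisj _ (hUu𝒰 a) _ (hUu𝒰 b) (hUuinj a b hab)
  set f : ℕ → C(K, ℝ) := fun n => f₀ (Uu n) with hfdef
  set t : ℕ → C(K, ℝ) := fun n => T (f n) with htdef
  -- Step 4: witness points
  have hpt : ∀ n, ∃ y, ε / 2 ≤ |t n y| := by
    intro n
    by_contra hco
    push_neg at hco
    have : ‖t n‖ ≤ ε / 2 := by
      rw [ContinuousMap.norm_le _ (by positivity)]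
      intro y
      rw [Real.norm_eq_abs]
      exact le_of_lt (hco y)
    have := hUuS n
    change ε ≤ ‖t n‖ at this
    linarith [this.trans ‹‖t n‖ ≤ ε / 2›]
  choose x hx using hpt
  set c : ℕ → ℝ := fun n => if t n (x n) < 0 then (-1 : ℝ) else 1 with hcdef
  have hcabs : ∀ n, |c n| = 1 := by
    intro n
    simp only [hcdef]
    split_ifs <;> simp
  set g : ℕ → C(K, ℝ) := fun n => c n • t n with hgdef
  have hgx : ∀ n, ε / 2 ≤ g n (x n) := by
    intro n
    have := hx n
    simp only [hgdef, hcdef, ContinuousMap.smul_apply, smul_eq_mul]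
    split_ifs with h
    · rw [abs_of_neg h] at this; linarith
    · rw [abs_of_nonneg (not_lt.mp h)] at this; linarith
  -- Step 5: combination identities and bounds
  have hTsum : ∀ (d : ℕ → ℝ) (F : Finset ℕ),
      (∑ k ∈ F, d k • g k) = T (∑ k ∈ F, (d k * c k) • f k) := by
    intro d F
    rw [map_sum]
    refine Finset.sum_congr rfl fun k _ => ?_
    rw [map_smul, hgdef]
    simp only
    rw [smul_smul]
  have hballf : ∀ (d : ℕ → ℝ), (∀ k, |d k| ≤ 1) → ∀ F : Finset ℕ,
      (∑ k ∈ F, (d k * c k) • f k) ∈ Metric.closedBall (0 : C(K, ℝ)) 1 := by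
    intro d hd F
    rw [mem_closedBall_zero_iff]
    refine aux_norm_sum_le Uu hdisU f (fun n y hy => hzero _ (hUu𝒰 n) y hy)
      (fun n y => h01 _ (hUu𝒰 n) y) _ (fun k => ?_) F
    rw [abs_mul, hcabs k, mul_one]
    exact hd k
  have hmemball : ∀ (d : ℕ → ℝ), (∀ k, |d k| ≤ 1) → ∀ F : Finset ℕ,
      (∑ k ∈ F, d k • g k) ∈ ⇑T '' Metric.closedBall 0 1 := by
    intro d hd F
    exact ⟨_, hballf d hd F, (hTsum d F).symm⟩
  have hnormcomb : ∀ (d : ℕ → ℝ), (∀ k, |d k| ≤ 1) → ∀ F : Finset ℕ,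
      ‖∑ k ∈ F, d k • g k‖ ≤ ‖T‖ := by
    intro d hd F
    rw [hTsum d F]
    calc ‖T (∑ k ∈ F, (d k * c k) • f k)‖
        ≤ ‖T‖ * ‖∑ k ∈ F, (d k * c k) • f k‖ := T.le_opNorm _
      _ ≤ ‖T‖ * 1 := by
          have := mem_closedBall_zero_iff.mp (hballf d hd F)
          exact mul_le_mul_of_nonneg_left this (norm_nonneg T)
      _ = ‖T‖ := mul_one _
  -- Step 6: pointwise absolute bounds
  have hH1 : ∀ (y : K) (F : Finset ℕ), (∑ k ∈ F, |g k y|) ≤ ‖T‖ := by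
    intro y F
    set d : ℕ → ℝ := fun k => if g k y < 0 then (-1 : ℝ) else 1 with hddef
    have hd : ∀ k, |d k| ≤ 1 := by
      intro k; simp only [hddef]; split_ifs <;> simp
    have habs : ∀ k, |g k y| = d k * g k y := by
      intro k; simp only [hddef]
      split_ifs with h
      · rw [abs_of_neg h]; ring
      · rw [abs_of_nonneg (not_lt.mp h)]; ring
    calc (∑ k ∈ F, |g k y|) = ∑ k ∈ F, d k * g k y := by
          exact Finset.sum_congr rfl fun k _ => habs k
      _ = (∑ k ∈ F, d k • g k) y := by
          rw [ContinuousMap.sum_apply]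
          exact Finset.sum_congr rfl fun k _ => rfl
      _ ≤ |(∑ k ∈ F, d k • g k) y| := le_abs_self _
      _ ≤ ‖∑ k ∈ F, d k • g k‖ := by
          rw [← Real.norm_eq_abs]
          exact ContinuousMap.norm_coe_le_norm _ y
      _ ≤ ‖T‖ := hnormcomb d hd F
  have hsummable : ∀ y : K, Summable fun k => |g k y| := by
    intro y
    exact summable_of_sum_range_le (fun k => abs_nonneg _) fun n => hH1 y (Finset.range n)
  -- Step 7: Rosenthal
  obtain ⟨A, hAinf, hA⟩ := aux_rosenthal (fun j k => |g k (x j)|) (fun j k => abs_nonneg _)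
    ‖T‖ (ε / 8) (by positivity) (fun j F => hH1 (x j) F)
  have hA' : {n | n ∈ A}.Infinite := by rwa [Set.setOf_mem_eq]
  set u : ℕ → ℕ := Nat.nth (· ∈ A) with hudef
  have humem : ∀ m', u m' ∈ A := fun m' => Nat.nth_mem_of_infinite hA' m'
  have humono : StrictMono u := Nat.nth_strictMono hA'
  -- Step 8: ultrafilter limit point in K
  set 𝔊 : Ultrafilter ℕ := Ultrafilter.of atTop with h𝔊def
  have h𝔊 : (𝔊 : Filter ℕ) ≤ atTop := Ultrafilter.of_le _
  obtain ⟨z, -, hz⟩ := (isCompact_univ : IsCompact (Set.univ : Set K)).ultrafilter_le_nhds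
    (𝔊.map fun m' => x (u m')) (by simp [le_principal_iff])
  have hztend : Tendsto (fun m' => x (u m')) (𝔊 : Filter ℕ) (𝓝 z) := hz
  -- Step 9: tail cutoff N
  have htail : Tendsto (fun i => ∑' k, |g (k + i) z|) atTop (𝓝 0) :=
    tendsto_sum_nat_add (fun n => |g n z|)
  obtain ⟨N, hN⟩ := (htail.eventually (eventually_le_nhds (by positivity : (0:ℝ) < ε / 8))).exists
  -- hN : ∑' k, |g (k + N) z| ≤ ε / 8
  -- Step 10: cut-off coefficients and partial sums
  set d : ℕ → ℝ := fun k => if k ∈ A ∧ N ≤ k then (1 : ℝ) else 0 with hddef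
  have hd : ∀ k, |d k| ≤ 1 := by
    intro k; simp only [hddef]; split_ifs <;> simp
  set P : ℕ → C(K, ℝ) := fun mm => ∑ k ∈ Finset.range mm, d k • g k with hPdef
  have hPmem : ∀ mm, P mm ∈ ⇑T '' Metric.closedBall 0 1 := fun mm => hmemball d hd _
  set W := closure (⇑(toWeakSpace ℝ C(K, ℝ)) '' (⇑T '' Metric.closedBall 0 1)) with hWdef
  have hWc : IsCompact W := hT
  set ℌ : Ultrafilter ℕ := Ultrafilter.of atTop with hℌdef
  have hℌ : (ℌ : Filter ℕ) ≤ atTop := Ultrafilter.of_le _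
  obtain ⟨w, hwW, hw⟩ := hWc.ultrafilter_le_nhds
    (ℌ.map fun mm => toWeakSpace ℝ C(K, ℝ) (P mm))
    (by
      rw [le_principal_iff, Ultrafilter.coe_map, Filter.mem_map]
      apply Filter.univ_mem'
      intro mm
      exact subset_closure (Set.mem_image_of_mem _ (hPmem mm)))
  set h : C(K, ℝ) := (toWeakSpace ℝ C(K, ℝ)).symm w with hhdef
  have hwt : Tendsto (fun mm => toWeakSpace ℝ C(K, ℝ) (P mm)) (ℌ : Filter ℕ) (𝓝 w) := hw
  -- summability of the cut-off series
  have hsum2 : ∀ y : K, Summable fun k => d k * g k y := by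
    intro y
    apply Summable.of_abs
    apply Summable.of_nonneg_of_le (fun k => abs_nonneg _) (fun k => ?_) (hsummable y)
    calc |d k * g k y| = |d k| * |g k y| := abs_mul _ _
      _ ≤ 1 * |g k y| := mul_le_mul_of_nonneg_right (hd k) (abs_nonneg _)
      _ = |g k y| := one_mul _
  -- Step 11: identification of the weak cluster point as the pointwise sum
  have hPapp : ∀ (mm : ℕ) (y : K), (P mm) y = ∑ k ∈ Finset.range mm, d k * g k y := by
    intro mm y
    simp only [hPdef]
    rw [ContinuousMap.sum_apply]
    exact Finset.sum_congr rfl fun k _ => rfl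
  have heval : ∀ y : K, h y = ∑' k, d k * g k y := by
    intro y
    have hcont := aux_weak_eval_continuous (E := C(K, ℝ)) (ContinuousMap.evalCLM ℝ y)
    have c1' := (hcont.tendsto w).comp hwt
    have c1 : Tendsto (fun mm => (P mm) y) (ℌ : Filter ℕ)
        (𝓝 (h y)) := by
      have heq : (fun mm => ContinuousMap.evalCLM ℝ y
          ((toWeakSpace ℝ C(K, ℝ)).symm (toWeakSpace ℝ C(K, ℝ) (P mm))))
          = fun mm => (P mm) y := by
        funext mm
        rw [LinearEquiv.symm_apply_apply]
        rfl
      rw [Function.comp_def, heq] at c1'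
      exact c1'
    have c2 : Tendsto (fun mm => (P mm) y) atTop (𝓝 (∑' k, d k * g k y)) := by
      have := (hsum2 y).hasSum.tendsto_sum_nat
      convert this using 1
      funext mm
      exact hPapp mm y
    exact tendsto_nhds_unique c1 (c2.mono_left hℌ)
  -- Step 12: lower bound at the points x j, j ∈ A, j ≥ N
  have hlow : ∀ j, j ∈ A → N ≤ j → ε / 2 - ε / 8 ≤ h (x j) := by
    intro j hjA hjN
    rw [heval (x j)]
    have hs := hsum2 (x j)
    rw [Summable.tsum_eq_add_tsum_ite hs j]
    have hdj : d j = 1 := by simp [hddef, hjA, hjN]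
    have hgj : ε / 2 ≤ g j (x j) := hgx j
    have hterm : ∀ k, |if k = j then 0 else d k * g k (x j)|
        ≤ (if k ∈ A ∧ N ≤ k ∧ k ≠ j then |g k (x j)| else 0) := by
      intro k
      by_cases h1 : k = j
      · simp [h1]
      · rw [if_neg h1]
        by_cases h2 : k ∈ A ∧ N ≤ k
        · rw [if_pos ⟨h2.1, h2.2, h1⟩]
          simp only [hddef, if_pos h2, one_mul]
          exact le_refl _
        · simp only [hddef, if_neg h2, zero_mul, abs_zero]
          split_ifs <;> simp [abs_nonneg]
    have hFsum : ∀ F : Finset ℕ,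
        (∑ k ∈ F, |if k = j then 0 else d k * g k (x j)|) ≤ ε / 8 := by
      intro F
      calc (∑ k ∈ F, |if k = j then 0 else d k * g k (x j)|)
          ≤ ∑ k ∈ F, (if k ∈ A ∧ N ≤ k ∧ k ≠ j then |g k (x j)| else 0) :=
            Finset.sum_le_sum fun k _ => hterm k
        _ = ∑ k ∈ F.filter (fun k => k ∈ A ∧ N ≤ k ∧ k ≠ j), |g k (x j)| :=
            (Finset.sum_filter _ _).symm
        _ ≤ ε / 8 := by
            apply hA j hjA
            intro k hk
            have := Finset.mem_filter.mp hk
            exact Set.mem_diff_singleton.mpr ⟨this.2.1, this.2.2.2⟩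
    have hsum3 : Summable fun k => |if k = j then 0 else d k * g k (x j)| := by
      apply summable_of_sum_range_le (fun k => abs_nonneg _)
      intro n
      exact hFsum (Finset.range n)
    have hR : |∑' k, if k = j then 0 else d k * g k (x j)| ≤ ε / 8 := by
      have h5 : ‖∑' k, if k = j then 0 else d k * g k (x j)‖
          ≤ ∑' k, ‖if k = j then 0 else d k * g k (x j)‖ := by
        apply norm_tsum_le_tsum_norm
        simpa only [Real.norm_eq_abs] using hsum3
      rw [Real.norm_eq_abs] at h5
      simp only [Real.norm_eq_abs] at h5
      refine h5.trans ?_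
      exact Summable.tsum_le_of_sum_le hsum3 hFsum
    have := neg_abs_le (∑' k, if k = j then 0 else d k * g k (x j))
    rw [hdj, one_mul]
    linarith
  -- Step 13: upper bound at z
  have hup : |h z| ≤ ε / 8 := by
    rw [heval z]
    have hsum4 : Summable fun k => |d k * g k z| := by
      apply Summable.of_nonneg_of_le (fun k => abs_nonneg _) (fun k => ?_) (hsummable z)
      calc |d k * g k z| = |d k| * |g k z| := abs_mul _ _
        _ ≤ 1 * |g k z| := mul_le_mul_of_nonneg_right (hd k) (abs_nonneg _)
        _ = |g k z| := one_mul _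
    have h5 : |∑' k, d k * g k z| ≤ ∑' k, |d k * g k z| := by
      have := norm_tsum_le_tsum_norm (f := fun k => d k * g k z)
        (by simpa only [Real.norm_eq_abs] using hsum4)
      simpa only [Real.norm_eq_abs] using this
    refine h5.trans ?_
    apply Summable.tsum_le_of_sum_le hsum4
    intro F
    have hterm : ∀ k, |d k * g k z| ≤ (if N ≤ k then |g k z| else 0) := by
      intro k
      by_cases h2 : k ∈ A ∧ N ≤ k
      · rw [if_pos h2.2]
        simp only [hddef, if_pos h2, one_mul]
        exact le_refl _
      · simp only [hddef, if_neg h2, zero_mul, abs_zero]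
        split_ifs <;> simp [abs_nonneg]
    have hshift : Summable fun i => |g (i + N) z| := by
      exact (summable_nat_add_iff N).mpr (hsummable z)
    calc (∑ k ∈ F, |d k * g k z|)
        ≤ ∑ k ∈ F, (if N ≤ k then |g k z| else 0) := Finset.sum_le_sum fun k _ => hterm k
      _ = ∑ k ∈ F.filter (fun k => N ≤ k), |g k z| := (Finset.sum_filter _ _).symm
      _ = ∑ i ∈ (F.filter (fun k => N ≤ k)).image (fun k => k - N), |g (i + N) z| := by
          rw [Finset.sum_image ?_]
          · apply Finset.sum_congr rfl
            intro k hk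
            rw [Nat.sub_add_cancel (Finset.mem_filter.mp hk).2]
          · intro a ha b hb hab
            have ha' := (Finset.mem_filter.mp ha).2
            have hb' := (Finset.mem_filter.mp hb).2
            have hab' : a - N = b - N := hab
            omega
      _ ≤ ∑' i, |g (i + N) z| := hshift.sum_le_tsum _ (fun i _ => abs_nonneg _)
      _ ≤ ε / 8 := hN
  -- Step 14: the contradiction
  have hc1 : Tendsto (fun m' => h (x (u m'))) (𝔊 : Filter ℕ) (𝓝 (h z)) :=
    (h.continuous.tendsto z).comp hztend
  have hev : ∀ᶠ m' in (𝔊 : Filter ℕ), ε / 2 - ε / 8 ≤ h (x (u m')) := by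
    apply Filter.Eventually.filter_mono h𝔊
    filter_upwards [eventually_ge_atTop N] with m' hm'
    exact hlow (u m') (humem m') (le_trans hm' humono.le_apply)
  have hzlow : ε / 2 - ε / 8 ≤ h z := ge_of_tendsto hc1 hev
  have hzup : h z ≤ ε / 8 := le_trans (le_abs_self _) hup
  linarith
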